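/- Let N ≥ 1 and let u : ℝ^N → ℝ be nonnegative, locally integrable, and radially symmetric with u(x) = φ(|x|) for some nonincreasing φ : [0,∞) → [0,∞). Then the function μ(u)(x) := |B₁(0)|^{−1} ∫_{B₁(x)} u(z) dz is radially symmetric and radially nonincreasing: there exists a nonincreasing ψ : [0,∞) → [0,∞) with μ(u)(x) = ψ(|x|) for all x ∈ ℝ^N. -/

import Mathlib

open MeasureTheory Filter Metric

set_option maxHeartbeats 1000000 in
theorem stmt13 (N : ℕ) (hN : 1 ≤ N) (u : EuclideanSpace ℝ (Fin N) → ℝ)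
    (hnn : ∀ x, 0 ≤ u x) (hloc : LocallyIntegrable u volume)
    (φ : ℝ → ℝ) (hφrad : ∀ x, u x = φ ‖x‖)
    (hφmono : AntitoneOn φ (Set.Ici 0))
    (hφnn : ∀ t ∈ Set.Ici (0:ℝ), 0 ≤ φ t) :
    ∃ ψ : ℝ → ℝ, AntitoneOn ψ (Set.Ici 0) ∧ (∀ t ∈ Set.Ici (0:ℝ), 0 ≤ ψ t) ∧
      ∀ x : EuclideanSpace ℝ (Fin N),
        (volume (Metric.ball (0 : EuclideanSpace ℝ (Fin N)) 1)).toReal⁻¹ *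
          (∫ z in Metric.ball x 1, u z) = ψ ‖x‖ := by
  classical
  set c : ℝ := (volume (Metric.ball (0 : EuclideanSpace ℝ (Fin N)) 1)).toReal⁻¹ with hc
  have hc0 : 0 ≤ c := by positivity
  set e : EuclideanSpace ℝ (Fin N) := EuclideanSpace.single (⟨0, hN⟩ : Fin N) (1 : ℝ) with he
  have hne : ‖e‖ = 1 := by
    rw [he, EuclideanSpace.norm_single, norm_one]
  -- integrability on balls
  have hInt : ∀ (x : EuclideanSpace ℝ (Fin N)) (r : ℝ),
      IntegrableOn u (Metric.ball x r) volume := fun x r =>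
    (hloc.integrableOn_isCompact (isCompact_closedBall x r)).mono_set
      Metric.ball_subset_closedBall
  -- the key monotonicity of the integral
  have key : ∀ s t : ℝ, 0 ≤ s → s ≤ t →
      (∫ z in Metric.ball (t • e) 1, u z) ≤ ∫ z in Metric.ball (s • e) 1, u z := by
    intro s t hs hst
    rcases eq_or_lt_of_le hst with rfl | hlt
    · exact le_refl _
    -- the reflection
    set L : EuclideanSpace ℝ (Fin N) ≃ₗᵢ[ℝ] EuclideanSpace ℝ (Fin N) :=
      Submodule.reflection (ℝ ∙ e)ᗮ with hL
    have hLe : L e = -e := Submodule.reflection_orthogonalComplement_singleton_eq_neg e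
    set R : EuclideanSpace ℝ (Fin N) → EuclideanSpace ℝ (Fin N) :=
      fun z => L z + (s + t) • e with hR
    have hLsmul : ∀ r : ℝ, L (r • e) = -(r • e) := by
      intro r
      rw [LinearIsometryEquiv.map_smul, hLe, smul_neg]
    have hRdist : ∀ z w : EuclideanSpace ℝ (Fin N), dist (R z) (R w) = dist z w := by
      intro z w
      simp only [hR, dist_eq_norm, add_sub_add_right_eq_sub, ← LinearIsometryEquiv.map_sub]
      exact L.norm_map _
    have hRs : R (s • e) = t • e := by
      simp only [hR, hLsmul]
      rw [add_smul]
      abel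
    have hRt : R (t • e) = s • e := by
      simp only [hR, hLsmul]
      rw [add_smul]
      abel
    -- R is measure preserving and a measurable embedding
    have hRmp : MeasurePreserving R volume volume :=
      (measurePreserving_add_right volume ((s + t) • e)).comp L.measurePreserving
    have hRemb : MeasurableEmbedding R := by
      have h : R = (L.toHomeomorph.toMeasurableEquiv.trans
          (MeasurableEquiv.addRight ((s + t) • e)) :
            EuclideanSpace ℝ (Fin N) ≃ᵐ EuclideanSpace ℝ (Fin N)) := rfl
      rw [h]
      exact MeasurableEquiv.measurableEmbedding _
    -- norm of R z
    have hRnorm : ∀ z : EuclideanSpace ℝ (Fin N), ‖R z‖ = ‖z - (s + t) • e‖ := by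
      intro z
      have h : R z = L (z - (s + t) • e) := by
        rw [LinearIsometryEquiv.map_sub, hLsmul, sub_neg_eq_add, hR]
      rw [h, L.norm_map]
    -- the preimage of the difference of balls
    set A : Set (EuclideanSpace ℝ (Fin N)) := Metric.ball (s • e) 1 with hA
    set B : Set (EuclideanSpace ℝ (Fin N)) := Metric.ball (t • e) 1 with hB
    have hpre : R ⁻¹' (B \ A) = A \ B := by
      ext z
      simp only [Set.mem_preimage, Set.mem_diff, hA, hB, Metric.mem_ball]
      have h1 : dist (R z) (t • e) = dist z (s • e) := by
        rw [← hRs, hRdist]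
      have h2 : dist (R z) (s • e) = dist z (t • e) := by
        rw [← hRt, hRdist]
      rw [h1, h2]
    -- pointwise comparison on A \ B
    have hpw : ∀ w ∈ A \ B, u (R w) ≤ u w := by
      rintro w ⟨hwA, hwB⟩
      rw [hA, Metric.mem_ball] at hwA
      rw [hB, Metric.mem_ball] at hwB
      push_neg at hwB
      have hd1 : ‖w - s • e‖ < 1 := by rwa [← dist_eq_norm]
      have hd2 : (1 : ℝ) ≤ ‖w - t • e‖ := by rwa [← dist_eq_norm]
      have hds : ‖w - s • e‖ ≤ ‖w - t • e‖ := le_trans hd1.le hd2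
      have hsq : ‖w - s • e‖ ^ 2 ≤ ‖w - t • e‖ ^ 2 := by
        have := norm_nonneg (w - s • e)
        nlinarith [norm_nonneg (w - t • e)]
      have hinner : ∀ r : ℝ, ‖w - r • e‖ ^ 2
          = ‖w‖ ^ 2 - 2 * r * (inner ℝ w e : ℝ) + r ^ 2 := by
        intro r
        rw [@norm_sub_sq_real, real_inner_smul_right, norm_smul, Real.norm_eq_abs, hne, mul_one,
          sq_abs]
        ring
      rw [hinner, hinner] at hsq
      -- hence inner w e ≤ (s+t)/2
      have hwe2 : (inner ℝ w e : ℝ) ≤ (s + t) / 2 := by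
        have ht0 : (0:ℝ) < t - s := by linarith
        nlinarith
      -- norm comparison
      have hnorms : ‖w‖ ≤ ‖R w‖ := by
        have h1 : ‖R w‖ ^ 2 = ‖w‖ ^ 2 - 2 * (s + t) * (inner ℝ w e : ℝ) + (s + t) ^ 2 := by
          rw [hRnorm, hinner]
        have h2 : ‖w‖ ^ 2 ≤ ‖R w‖ ^ 2 := by nlinarith
        nlinarith [norm_nonneg w, norm_nonneg (R w)]
      rw [hφrad, hφrad]
      exact hφmono (Set.mem_Ici.mpr (norm_nonneg _)) (Set.mem_Ici.mpr (norm_nonneg _)) hnorms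
    -- change of variables
    have hcv : (∫ z in B \ A, u z) = ∫ w in A \ B, u (R w) := by
      rw [← hRmp.setIntegral_preimage_emb hRemb u (B \ A), hpre]
    have hABmeas : MeasurableSet (A \ B) := measurableSet_ball.diff measurableSet_ball
    have hIntAB : IntegrableOn u (A \ B) volume := (hInt _ _).mono_set Set.diff_subset
    have hIntRA : IntegrableOn (fun w => u (R w)) (A \ B) volume := by
      have h := (hRmp.integrableOn_comp_preimage hRemb (f := u) (s := B \ A)).mpr
        ((hInt _ _).mono_set Set.diff_subset)
      rw [hpre] at h
      exact h
    have hle1 : (∫ w in A \ B, u (R w)) ≤ ∫ w in A \ B, u w :=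
      setIntegral_mono_on hIntRA hIntAB hABmeas hpw
    -- combine
    have hsplitB : (∫ z in B ∩ A, u z) + (∫ z in B \ A, u z) = ∫ z in B, u z :=
      integral_inter_add_diff measurableSet_ball (hInt _ _)
    have hsplitA : (∫ z in A ∩ B, u z) + (∫ z in A \ B, u z) = ∫ z in A, u z :=
      integral_inter_add_diff measurableSet_ball (hInt _ _)
    have hintercomm : (∫ z in B ∩ A, u z) = ∫ z in A ∩ B, u z := by rw [Set.inter_comm]
    calc (∫ z in B, u z) = (∫ z in B ∩ A, u z) + (∫ z in B \ A, u z) := hsplitB.symm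
      _ = (∫ z in A ∩ B, u z) + (∫ w in A \ B, u (R w)) := by rw [hintercomm, hcv]
      _ ≤ (∫ z in A ∩ B, u z) + (∫ w in A \ B, u w) := by linarith
      _ = ∫ z in A, u z := hsplitA
  -- radiality
  have hrad : ∀ x : EuclideanSpace ℝ (Fin N),
      (∫ z in Metric.ball x 1, u z) = ∫ z in Metric.ball (‖x‖ • e) 1, u z := by
    intro x
    have hnorm_eq : ‖(‖x‖ • e : EuclideanSpace ℝ (Fin N))‖ = ‖x‖ := by
      rw [norm_smul, Real.norm_eq_abs, abs_of_nonneg (norm_nonneg x), hne, mul_one]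
    set Q : EuclideanSpace ℝ (Fin N) ≃ₗᵢ[ℝ] EuclideanSpace ℝ (Fin N) :=
      Submodule.reflection (ℝ ∙ ((‖x‖ • e : EuclideanSpace ℝ (Fin N)) - x))ᗮ with hQ
    have hQx : Q (‖x‖ • e) = x := Submodule.reflection_sub hnorm_eq
    have hQmp : MeasurePreserving Q volume volume := Q.measurePreserving
    have hQemb : MeasurableEmbedding Q := by
      have h : (Q : EuclideanSpace ℝ (Fin N) → EuclideanSpace ℝ (Fin N))
          = (Q.toHomeomorph.toMeasurableEquiv :
              EuclideanSpace ℝ (Fin N) ≃ᵐ EuclideanSpace ℝ (Fin N)) := rfl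
      rw [h]
      exact MeasurableEquiv.measurableEmbedding _
    have hpre : (Q : EuclideanSpace ℝ (Fin N) → EuclideanSpace ℝ (Fin N)) ⁻¹'
        (Metric.ball x 1) = Metric.ball (‖x‖ • e) 1 := by
      ext z
      simp only [Set.mem_preimage, Metric.mem_ball]
      have hd := Q.dist_map z (‖x‖ • e)
      rw [hQx] at hd
      rw [hd]
    rw [← hQmp.setIntegral_preimage_emb hQemb u (Metric.ball x 1), hpre]
    apply setIntegral_congr_fun measurableSet_ball
    intro z _
    show u (Q z) = u z
    rw [hφrad (Q z), hφrad z, Q.norm_map]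
  refine ⟨fun t => c * ∫ z in Metric.ball (t • e) 1, u z, ?_, ?_, ?_⟩
  · intro s hs t ht hst
    exact mul_le_mul_of_nonneg_left (key s t hs hst) hc0
  · intro t ht
    exact mul_nonneg hc0 (setIntegral_nonneg measurableSet_ball fun z _ => hnn z)
  · intro x
    rw [hrad x]
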